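/- Let R be a noetherian domain, σ an automorphism of R, and a a nonzero central element of R. Then the generalized Weyl algebra R(σ, a), generated over R by x and y subject to yx = a, xy = σ(a), xr = σ(r)x, and yr = σ^{-1}(r)y for all r ∈ R, is a domain. -/

import Mathlib

namespace GWA

variable (R : Type) [Ring R] (σ : R ≃+* R) (a : R)

/-- Generators of the generalized Weyl algebra: a copy of `R`
(via `Sum.inl`) together with `x = Sum.inr 0` and `y = Sum.inr 1`. -/
abbrev F := FreeAlgebra ℤ (R ⊕ Fin 2)

/-- The embedding of an element of `R` as a generator. -/
noncomputable def e (r : R) : F R := FreeAlgebra.ι ℤ (Sum.inl r)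

noncomputable def X : F R := FreeAlgebra.ι ℤ (Sum.inr 0)

noncomputable def Y : F R := FreeAlgebra.ι ℤ (Sum.inr 1)

/-- The defining relations of the generalized Weyl algebra `R(σ, a)`:
the copy of `R` is a subring, and `y x = a`, `x y = σ(a)`, `x r = σ(r) x`,
`y r = σ⁻¹(r) y` for all `r ∈ R`. -/
inductive Rel : F R → F R → Prop
  | add (r s : R) : Rel (e R r + e R s) (e R (r + s))
  | mul (r s : R) : Rel (e R r * e R s) (e R (r * s))
  | one : Rel (e R 1) 1
  | yx : Rel (Y R * X R) (e R a)
  | xy : Rel (X R * Y R) (e R (σ a))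
  | xr (r : R) : Rel (X R * e R r) (e R (σ r) * X R)
  | yr (r : R) : Rel (Y R * e R r) (e R (σ.symm r) * Y R)

/-- The generalized Weyl algebra `R(σ, a)`. -/
abbrev GeneralizedWeylAlgebra := RingQuot (Rel R σ a)

end GWA

namespace GWAP

open GWA Finsupp

variable (R : Type) [Ring R] (σ : R ≃+* R) (a : R)

noncomputable def op (k : ℤ) (φ : R →+ R) : Module.End ℤ (ℤ →₀ R) :=
  (Finsupp.lmapDomain R ℤ (· + k)).comp (Finsupp.mapRange.linearMap φ.toIntLinearMap)

lemma op_single (k : ℤ) (φ : R →+ R) (n : ℤ) (q : R) :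
    op R k φ (Finsupp.single n q) = Finsupp.single (n + k) (φ q) := by
  simp only [op, LinearMap.coe_comp, Function.comp_apply,
    Finsupp.mapRange.linearMap_apply, Finsupp.mapRange_single,
    Finsupp.lmapDomain_apply, Finsupp.mapDomain_single, AddMonoidHom.coe_toIntLinearMap]

noncomputable def Eop (r : R) : Module.End ℤ (ℤ →₀ R) :=
  op R 0 (AddMonoidHom.mulLeft r)

lemma Eop_single (r : R) (n : ℤ) (q : R) :
    Eop R r (Finsupp.single n q) = Finsupp.single n (r * q) := by
  rw [Eop, op_single]; simp only [add_zero, AddMonoidHom.coe_mulLeft]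

noncomputable def Xop : Module.End ℤ (ℤ →₀ R) :=
  op R 1 (AddMonoidHom.mk' (⇑σ) (map_add σ))

lemma Xop_single (n : ℤ) (q : R) :
    Xop R σ (Finsupp.single n q) = Finsupp.single (n + 1) (σ q) := by
  rw [Xop, op_single]; rfl

noncomputable def Yop : Module.End ℤ (ℤ →₀ R) :=
  op R (-1) (AddMonoidHom.mk' (fun q => σ.symm q * a) (by intro p q; simp [map_add, add_mul]))

lemma Yop_single (n : ℤ) (q : R) :
    Yop R σ a (Finsupp.single n q) = Finsupp.single (n - 1) (σ.symm q * a) := by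
  rw [Yop, op_single, sub_eq_add_neg]; rfl

noncomputable def gen : R ⊕ Fin 2 → Module.End ℤ (ℤ →₀ R) :=
  Sum.elim (Eop R) ![Xop R σ, Yop R σ a]

noncomputable def rho' : F R →ₐ[ℤ] Module.End ℤ (ℤ →₀ R) :=
  FreeAlgebra.lift ℤ (gen R σ a)

lemma rho'_e (r : R) : rho' R σ a (e R r) = Eop R r := by
  simp [rho', e, gen]

lemma rho'_X : rho' R σ a (X R) = Xop R σ := by
  simp [rho', X, gen]

lemma rho'_Y : rho' R σ a (Y R) = Yop R σ a := by
  simp [rho', Y, gen]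

lemma rho'_rel (hc : ∀ g : R, g * a = a * g) :
    ∀ ⦃u v : F R⦄, Rel R σ a u v → rho' R σ a u = rho' R σ a v := by
  intro u v h
  induction h with
  | add r s =>
      rw [map_add, rho'_e, rho'_e, rho'_e]
      refine Finsupp.lhom_ext fun n q => ?_
      simp only [LinearMap.add_apply, Eop_single, ← Finsupp.single_add, add_mul]
  | mul r s =>
      rw [map_mul, rho'_e, rho'_e, rho'_e]
      refine Finsupp.lhom_ext fun n q => ?_
      simp only [Module.End.mul_apply, Eop_single, mul_assoc]
  | one =>
      rw [rho'_e, map_one]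
      refine Finsupp.lhom_ext fun n q => ?_
      simp only [Eop_single, one_mul, Module.End.one_apply]
  | yx =>
      rw [map_mul, rho'_e, rho'_X, rho'_Y]
      refine Finsupp.lhom_ext fun n q => ?_
      simp only [Module.End.mul_apply, Eop_single, Xop_single, Yop_single,
        add_sub_cancel_right, RingEquiv.symm_apply_apply, ← hc]
  | xy =>
      rw [map_mul, rho'_e, rho'_X, rho'_Y]
      refine Finsupp.lhom_ext fun n q => ?_
      have : σ a * q = q * σ a := by
        have : a * σ.symm q = σ.symm q * a := (hc (σ.symm q)).symm
        calc σ a * q = σ (a * σ.symm q) := by simp [map_mul]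
        _ = σ (σ.symm q * a) := by rw [this]
        _ = q * σ a := by simp [map_mul]
      simp only [Module.End.mul_apply, Eop_single, Xop_single, Yop_single, map_mul,
        sub_add_cancel, RingEquiv.apply_symm_apply, this]
  | xr r =>
      rw [map_mul, map_mul, rho'_e, rho'_e, rho'_X]
      refine Finsupp.lhom_ext fun n q => ?_
      simp only [Module.End.mul_apply, Eop_single, Xop_single, map_mul]
  | yr r =>
      rw [map_mul, map_mul, rho'_e, rho'_e, rho'_Y]
      refine Finsupp.lhom_ext fun n q => ?_
      simp only [Module.End.mul_apply, Eop_single, Yop_single, map_mul, mul_assoc]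

noncomputable def rho (hc : ∀ g : R, g * a = a * g) :
    GeneralizedWeylAlgebra R σ a →+* Module.End ℤ (ℤ →₀ R) :=
  RingQuot.lift ⟨(rho' R σ a).toRingHom, fun _ _ h => rho'_rel R σ a hc h⟩

lemma rho_mk (hc : ∀ g : R, g * a = a * g) (u : F R) :
    rho R σ a hc (RingQuot.mkRingHom (Rel R σ a) u) = rho' R σ a u := by
  simp [rho, RingQuot.lift_mkRingHom_apply]

end GWAP

namespace GWAP

open GWA Finsupp

variable (R : Type) [Ring R] (σ : R ≃+* R) (a : R)

lemma Xop_pow (k : ℕ) (n : ℤ) (q : R) :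
    (Xop R σ ^ k) (Finsupp.single n q) = Finsupp.single (n + k) ((⇑σ)^[k] q) := by
  induction k generalizing n q with
  | zero =>
      simp only [pow_zero, Module.End.one_apply, Function.iterate_zero, id_eq,
        Nat.cast_zero, add_zero]
  | succ k ih =>
      rw [pow_succ, Module.End.mul_apply, Xop_single, ih, Function.iterate_succ_apply]
      congr 1
      push_cast; ring

noncomputable def yc (k : ℕ) (q : R) : R := (fun q => σ.symm q * a)^[k] q

lemma yc_succ (k : ℕ) (q : R) : yc R σ a (k + 1) q = yc R σ a k (σ.symm q * a) :=
  Function.iterate_succ_apply _ _ _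

lemma Yop_pow (k : ℕ) (n : ℤ) (q : R) :
    (Yop R σ a ^ k) (Finsupp.single n q) = Finsupp.single (n - k) (yc R σ a k q) := by
  induction k generalizing n q with
  | zero =>
      simp only [pow_zero, Module.End.one_apply, yc, Function.iterate_zero, id_eq,
        Nat.cast_zero, sub_zero]
  | succ k ih =>
      rw [pow_succ, Module.End.mul_apply, Yop_single, ih, ← yc_succ]
      congr 1
      push_cast; ring

noncomputable def g (m : ℤ) (q : R) : R :=
  if 0 ≤ m then (⇑σ)^[m.toNat] q else yc R σ a (-m).toNat q

lemma sigma_iter_ne_zero (k : ℕ) (q : R) (hq : q ≠ 0) : (⇑σ)^[k] q ≠ 0 := by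
  induction k generalizing q with
  | zero => simpa
  | succ k ih =>
      rw [Function.iterate_succ_apply]
      exact ih _ (fun h => hq (by simpa using congrArg σ.symm h))

lemma yc_ne_zero [IsDomain R] (ha0 : a ≠ 0) (k : ℕ) (q : R) (hq : q ≠ 0) :
    yc R σ a k q ≠ 0 := by
  induction k generalizing q with
  | zero => simpa [yc]
  | succ k ih =>
      rw [yc_succ]
      exact ih _ (mul_ne_zero (fun h => hq (by simpa using congrArg σ h)) ha0)

lemma g_ne_zero [IsDomain R] (ha0 : a ≠ 0) (m : ℤ) (q : R) (hq : q ≠ 0) :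
    g R σ a m q ≠ 0 := by
  rw [g]
  split
  · exact sigma_iter_ne_zero R σ _ _ hq
  · exact yc_ne_zero R σ a ha0 _ _ hq

end GWAP

namespace GWAP

open GWA Finsupp

variable (R : Type) [Ring R] (σ : R ≃+* R) (a : R)

noncomputable def mkA : F R →+* GeneralizedWeylAlgebra R σ a :=
  RingQuot.mkRingHom (Rel R σ a)

noncomputable def E (r : R) : GeneralizedWeylAlgebra R σ a := mkA R σ a (e R r)
noncomputable def xA : GeneralizedWeylAlgebra R σ a := mkA R σ a (X R)
noncomputable def yA : GeneralizedWeylAlgebra R σ a := mkA R σ a (Y R)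

noncomputable def z (m : ℤ) : GeneralizedWeylAlgebra R σ a :=
  if 0 ≤ m then xA R σ a ^ m.toNat else yA R σ a ^ (-m).toNat

noncomputable def W (m : ℤ) (r : R) : GeneralizedWeylAlgebra R σ a :=
  E R σ a r * z R σ a m

lemma E_add (r s : R) : E R σ a r + E R σ a s = E R σ a (r + s) := by
  rw [E, E, E, ← map_add]
  exact RingQuot.mkRingHom_rel (Rel.add r s)

lemma E_mul (r s : R) : E R σ a r * E R σ a s = E R σ a (r * s) := by
  rw [E, E, E, ← map_mul]
  exact RingQuot.mkRingHom_rel (Rel.mul r s)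

lemma E_one : E R σ a 1 = 1 := by
  have h := RingQuot.mkRingHom_rel (Rel.one (R := R) (σ := σ) (a := a))
  rw [E, mkA, h, map_one]

lemma E_zero : E R σ a 0 = 0 := by
  have h := E_add R σ a 0 0
  rw [add_zero] at h
  exact add_eq_left.mp h

lemma E_neg (r : R) : E R σ a (-r) = - E R σ a r := by
  have h := E_add R σ a r (-r)
  rw [add_neg_cancel, E_zero] at h
  exact eq_neg_of_add_eq_zero_left (by rw [add_comm]; exact h)

lemma xE (r : R) : xA R σ a * E R σ a r = E R σ a (σ r) * xA R σ a := by
  have h := RingQuot.mkRingHom_rel (Rel.xr (σ := σ) (a := a) r)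
  rw [map_mul, map_mul] at h
  exact h

lemma yE (r : R) : yA R σ a * E R σ a r = E R σ a (σ.symm r) * yA R σ a := by
  have h := RingQuot.mkRingHom_rel (Rel.yr (σ := σ) (a := a) r)
  rw [map_mul, map_mul] at h
  exact h

lemma yxA : yA R σ a * xA R σ a = E R σ a a := by
  have h := RingQuot.mkRingHom_rel (Rel.yx (R := R) (σ := σ) (a := a))
  rw [map_mul] at h
  exact h

lemma xyA : xA R σ a * yA R σ a = E R σ a (σ a) := by
  have h := RingQuot.mkRingHom_rel (Rel.xy (R := R) (σ := σ) (a := a))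
  rw [map_mul] at h
  exact h

lemma xpow_E (k : ℕ) (r : R) :
    xA R σ a ^ k * E R σ a r = E R σ a ((⇑σ)^[k] r) * xA R σ a ^ k := by
  induction k generalizing r with
  | zero => simp
  | succ k ih =>
      rw [pow_succ, mul_assoc, xE, ← mul_assoc, ih, Function.iterate_succ_apply, mul_assoc,
        ← pow_succ]

lemma ypow_E (k : ℕ) (r : R) :
    yA R σ a ^ k * E R σ a r = E R σ a ((⇑σ.symm)^[k] r) * yA R σ a ^ k := by
  induction k generalizing r with
  | zero => simp
  | succ k ih =>
      rw [pow_succ, mul_assoc, yE, ← mul_assoc, ih, Function.iterate_succ_apply, mul_assoc,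
        ← pow_succ]

lemma z_natCast (k : ℕ) : z R σ a (k : ℤ) = xA R σ a ^ k := by
  rw [z, if_pos (Int.natCast_nonneg k), Int.toNat_natCast]

lemma z_negNatCast (k : ℕ) : z R σ a (-(k : ℤ)) = yA R σ a ^ k := by
  cases k with
  | zero => simp [z]
  | succ k =>
      rw [z, if_neg (by omega)]
      congr 1

end GWAP

namespace GWAP

open GWA Finsupp

variable (R : Type) [Ring R] (σ : R ≃+* R) (a : R)

lemma xypow (p q : ℕ) : ∃ c : R, xA R σ a ^ p * yA R σ a ^ q =
    E R σ a c * z R σ a ((p : ℤ) - (q : ℤ)) := by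
  induction p generalizing q with
  | zero =>
      refine ⟨1, ?_⟩
      rw [pow_zero, one_mul, E_one, one_mul]
      rw [show ((0:ℕ):ℤ) - (q:ℤ) = -(q:ℤ) by push_cast; ring, z_negNatCast]
  | succ p ih =>
      cases q with
      | zero =>
          refine ⟨1, ?_⟩
          rw [pow_zero, mul_one, E_one, one_mul]
          rw [show ((p+1:ℕ):ℤ) - ((0:ℕ):ℤ) = ((p+1:ℕ):ℤ) by push_cast; ring, z_natCast]
      | succ q =>
          obtain ⟨c, hc⟩ := ih q
          refine ⟨(⇑σ)^[p] (σ a) * c, ?_⟩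
          have h1 : xA R σ a ^ (p + 1) * yA R σ a ^ (q + 1)
              = xA R σ a ^ p * (xA R σ a * yA R σ a) * yA R σ a ^ q := by
            rw [pow_succ, pow_succ']; simp only [mul_assoc]
          rw [h1, xyA, xpow_E, mul_assoc, hc, ← mul_assoc, E_mul]
          congr 2
          push_cast; ring

lemma yxpow (q p : ℕ) : ∃ c : R, yA R σ a ^ q * xA R σ a ^ p =
    E R σ a c * z R σ a ((p : ℤ) - (q : ℤ)) := by
  induction q generalizing p with
  | zero =>
      refine ⟨1, ?_⟩
      rw [pow_zero, one_mul, E_one, one_mul]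
      rw [show ((p:ℕ):ℤ) - ((0:ℕ):ℤ) = ((p:ℕ):ℤ) by push_cast; ring, z_natCast]
  | succ q ih =>
      cases p with
      | zero =>
          refine ⟨1, ?_⟩
          rw [pow_zero, mul_one, E_one, one_mul]
          rw [show ((0:ℕ):ℤ) - ((q+1:ℕ):ℤ) = -((q+1:ℕ):ℤ) by push_cast; ring, z_negNatCast]
      | succ p =>
          obtain ⟨c, hc⟩ := ih p
          refine ⟨(⇑σ.symm)^[q] a * c, ?_⟩
          have h1 : yA R σ a ^ (q + 1) * xA R σ a ^ (p + 1)
              = yA R σ a ^ q * (yA R σ a * xA R σ a) * xA R σ a ^ p := by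
            rw [pow_succ, pow_succ']; simp only [mul_assoc]
          rw [h1, yxA, ypow_E, mul_assoc, hc, ← mul_assoc, E_mul]
          congr 2
          push_cast; ring

lemma z_rep (m : ℤ) : (0 ≤ m ∧ z R σ a m = xA R σ a ^ m.toNat) ∨
    (¬ 0 ≤ m ∧ z R σ a m = yA R σ a ^ (-m).toNat) := by
  by_cases h : 0 ≤ m
  · exact Or.inl ⟨h, by rw [z, if_pos h]⟩
  · exact Or.inr ⟨h, by rw [z, if_neg h]⟩

lemma zE (m : ℤ) (s : R) : ∃ t : R, z R σ a m * E R σ a s = E R σ a t * z R σ a m := by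
  rcases z_rep R σ a m with ⟨_, hz⟩ | ⟨_, hz⟩
  · exact ⟨_, by rw [hz, xpow_E]⟩
  · exact ⟨_, by rw [hz, ypow_E]⟩

lemma zmul (m n : ℤ) : ∃ (c : R) (k : ℤ), z R σ a m * z R σ a n = E R σ a c * z R σ a k := by
  rcases z_rep R σ a m with ⟨hm, hzm⟩ | ⟨hm, hzm⟩ <;>
    rcases z_rep R σ a n with ⟨hn, hzn⟩ | ⟨hn, hzn⟩
  · refine ⟨1, m + n, ?_⟩
    rw [hzm, hzn, ← pow_add, E_one, one_mul]
    have : m + n = ((m.toNat + n.toNat : ℕ) : ℤ) := by omega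
    rw [this, z_natCast]
  · obtain ⟨c, hc⟩ := xypow R σ a m.toNat (-n).toNat
    refine ⟨c, m + n, ?_⟩
    rw [hzm, hzn, hc]
    congr 2
    omega
  · obtain ⟨c, hc⟩ := yxpow R σ a (-m).toNat n.toNat
    refine ⟨c, m + n, ?_⟩
    rw [hzm, hzn, hc]
    congr 2
    omega
  · refine ⟨1, m + n, ?_⟩
    rw [hzm, hzn, ← pow_add, E_one, one_mul]
    have : m + n = -(((-m).toNat + (-n).toNat : ℕ) : ℤ) := by omega
    rw [this, z_negNatCast]

lemma Wmul (m n : ℤ) (r s : R) : ∃ (k : ℤ) (t : R),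
    W R σ a m r * W R σ a n s = W R σ a k t := by
  obtain ⟨t1, ht1⟩ := zE R σ a m s
  obtain ⟨c, k, hck⟩ := zmul R σ a m n
  refine ⟨k, r * t1 * c, ?_⟩
  rw [W, W, W]
  calc E R σ a r * z R σ a m * (E R σ a s * z R σ a n)
      = E R σ a r * (z R σ a m * E R σ a s) * z R σ a n := by simp only [mul_assoc]
    _ = E R σ a r * (E R σ a t1 * z R σ a m) * z R σ a n := by rw [ht1]
    _ = E R σ a r * E R σ a t1 * (z R σ a m * z R σ a n) := by simp only [mul_assoc]
    _ = E R σ a r * E R σ a t1 * (E R σ a c * z R σ a k) := by rw [hck]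
    _ = E R σ a r * E R σ a t1 * E R σ a c * z R σ a k := by simp only [mul_assoc]
    _ = E R σ a (r * t1 * c) * z R σ a k := by rw [E_mul, E_mul]

lemma W_add (m : ℤ) (r s : R) : W R σ a m (r + s) = W R σ a m r + W R σ a m s := by
  rw [W, W, W, ← E_add, add_mul]

lemma W_zero (m : ℤ) : W R σ a m 0 = 0 := by
  rw [W, E_zero, zero_mul]

end GWAP

namespace GWAP

open GWA Finsupp

variable (R : Type) [Ring R] (σ : R ≃+* R) (a : R)

def HasRep (u : GeneralizedWeylAlgebra R σ a) : Prop :=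
  ∃ f : ℤ →₀ R, u = f.sum (fun m r => W R σ a m r)

lemma hasRep_W (m : ℤ) (r : R) : HasRep R σ a (W R σ a m r) :=
  ⟨Finsupp.single m r, by rw [Finsupp.sum_single_index (W_zero R σ a m)]⟩

lemma hasRep_zero : HasRep R σ a 0 := ⟨0, by rw [Finsupp.sum_zero_index]⟩

lemma hasRep_add {u v : GeneralizedWeylAlgebra R σ a} (hu : HasRep R σ a u)
    (hv : HasRep R σ a v) : HasRep R σ a (u + v) := by
  obtain ⟨f, rfl⟩ := hu
  obtain ⟨g, rfl⟩ := hv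
  refine ⟨f + g, ?_⟩
  rw [Finsupp.sum_add_index' (fun m => W_zero R σ a m) (fun m r s => W_add R σ a m r s)]

lemma hasRep_neg {u : GeneralizedWeylAlgebra R σ a} (hu : HasRep R σ a u) :
    HasRep R σ a (-u) := by
  obtain ⟨f, rfl⟩ := hu
  refine ⟨-f, ?_⟩
  rw [Finsupp.sum_neg_index (fun m => W_zero R σ a m)]
  rw [Finsupp.sum, Finsupp.sum, ← Finset.sum_neg_distrib]
  refine Finset.sum_congr rfl fun m _ => ?_
  rw [W, W, E_neg]
  exact (neg_mul (E R σ a (f m)) (z R σ a m)).symm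


lemma hasRep_one : HasRep R σ a 1 := by
  have h1 : (1 : GeneralizedWeylAlgebra R σ a) = W R σ a 0 1 := by
    rw [W, E_one, one_mul, z, if_pos le_rfl, Int.toNat_zero, pow_zero]
  rw [h1]
  exact hasRep_W R σ a 0 1

lemma hasRep_sum {β : Type*} (s : Finset β) (F : β → GeneralizedWeylAlgebra R σ a)
    (h : ∀ b ∈ s, HasRep R σ a (F b)) : HasRep R σ a (∑ b ∈ s, F b) := by
  classical
  induction s using Finset.induction with
  | empty => simpa using hasRep_zero R σ a
  | insert _ _ hb ih =>
      rw [Finset.sum_insert hb]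
      exact hasRep_add R σ a (h _ (Finset.mem_insert_self _ _))
        (ih fun b hbs => h b (Finset.mem_insert_of_mem hbs))

lemma hasRep_mul {u v : GeneralizedWeylAlgebra R σ a} (hu : HasRep R σ a u)
    (hv : HasRep R σ a v) : HasRep R σ a (u * v) := by
  obtain ⟨f, rfl⟩ := hu
  obtain ⟨g, rfl⟩ := hv
  rw [Finsupp.sum, Finsupp.sum, Finset.sum_mul_sum]
  refine hasRep_sum R σ a _ _ fun m _ => hasRep_sum R σ a _ _ fun n _ => ?_
  obtain ⟨k, t, hkt⟩ := Wmul R σ a m n (f m) (g n)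
  rw [hkt]
  exact hasRep_W R σ a k t

lemma hasRep_intCast (i : ℤ) : HasRep R σ a (i : GeneralizedWeylAlgebra R σ a) := by
  induction i using Int.induction_on with
  | zero => simpa using hasRep_zero R σ a
  | succ n ih => push_cast; exact hasRep_add R σ a ih (hasRep_one R σ a)
  | pred n ih =>
      have h2 : ((-(n:ℤ) - 1 : ℤ) : GeneralizedWeylAlgebra R σ a)
          = ((-(n:ℤ) : ℤ) : GeneralizedWeylAlgebra R σ a) + (-(1 : GeneralizedWeylAlgebra R σ a)) := by
        push_cast
        rw [sub_eq_add_neg]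
      rw [h2]
      exact hasRep_add R σ a ih (hasRep_neg R σ a (hasRep_one R σ a))

lemma hasRep_all (u : GeneralizedWeylAlgebra R σ a) : HasRep R σ a u := by
  obtain ⟨v, rfl⟩ := RingQuot.mkRingHom_surjective (Rel R σ a) u
  induction v using FreeAlgebra.induction with
  | grade0 i =>
      rw [show algebraMap ℤ (F R) i = (i : F R) by simp [algebraMap_int_eq, eq_intCast],
        map_intCast]
      exact hasRep_intCast R σ a i
  | grade1 w =>
      rcases w with r | ⟨(_|_|j), hj⟩
      · have h3 : RingQuot.mkRingHom (Rel R σ a) (FreeAlgebra.ι ℤ (Sum.inl r)) = W R σ a 0 r := by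
          rw [W, z, if_pos le_rfl, Int.toNat_zero, pow_zero, mul_one]; rfl
        rw [h3]; exact hasRep_W R σ a 0 r
      · have h3 : RingQuot.mkRingHom (Rel R σ a) (FreeAlgebra.ι ℤ (Sum.inr ⟨0, hj⟩))
            = W R σ a 1 1 := by
          rw [W, E_one, one_mul, z, if_pos (by norm_num), show (1:ℤ).toNat = 1 from rfl,
            pow_one]; rfl
        rw [h3]; exact hasRep_W R σ a 1 1
      · have h3 : RingQuot.mkRingHom (Rel R σ a) (FreeAlgebra.ι ℤ (Sum.inr ⟨1, hj⟩))
            = W R σ a (-1) 1 := by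
          rw [W, E_one, one_mul, z, if_neg (by norm_num), show (-(-1:ℤ)).toNat = 1 from rfl,
            pow_one]; rfl
        rw [h3]; exact hasRep_W R σ a (-1) 1
      · omega
  | mul u v hu hv => rw [map_mul]; exact hasRep_mul R σ a hu hv
  | add u v hu hv => rw [map_add]; exact hasRep_add R σ a hu hv

end GWAP

namespace GWAP

open GWA Finsupp

variable (R : Type) [Ring R] (σ : R ≃+* R) (a : R) (hc : ∀ g : R, g * a = a * g)

lemma rho_E (r : R) : rho R σ a hc (E R σ a r) = Eop R r := by
  rw [E, mkA, rho_mk, rho'_e]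

lemma rho_x : rho R σ a hc (xA R σ a) = Xop R σ := by rw [xA, mkA, rho_mk, rho'_X]

lemma rho_y : rho R σ a hc (yA R σ a) = Yop R σ a := by rw [yA, mkA, rho_mk, rho'_Y]

lemma rho_z_single (m n : ℤ) (q : R) :
    rho R σ a hc (z R σ a m) (Finsupp.single n q)
      = Finsupp.single (n + m) (g R σ a m q) := by
  rcases z_rep R σ a m with ⟨hm, hz⟩ | ⟨hm, hz⟩
  · rw [hz, map_pow, rho_x, Xop_pow, g, if_pos hm, Int.toNat_of_nonneg hm]
  · rw [hz, map_pow, rho_y, Yop_pow, g, if_neg hm]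
    congr 1
    omega

lemma rho_W_single (m : ℤ) (r : R) (n : ℤ) (q : R) :
    rho R σ a hc (W R σ a m r) (Finsupp.single n q)
      = Finsupp.single (n + m) (r * g R σ a m q) := by
  rw [W, map_mul, Module.End.mul_apply, rho_z_single, rho_E, Eop_single]

lemma rho_sum_apply (f : ℤ →₀ R) (n : ℤ) (q : R) (j : ℤ) :
    (rho R σ a hc (f.sum fun m r => W R σ a m r) (Finsupp.single n q)) j
      = ∑ m ∈ f.support, (if n + m = j then f m * g R σ a m q else 0) := by
  rw [Finsupp.sum, map_sum, LinearMap.sum_apply, Finsupp.finset_sum_apply]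
  refine Finset.sum_congr rfl fun m _ => ?_
  rw [rho_W_single, Finsupp.single_apply]

lemma key [IsDomain R] (ha0 : a ≠ 0) (u : GeneralizedWeylAlgebra R σ a) (hu : u ≠ 0) :
    ∃ M : ℤ, ∀ n q, q ≠ 0 →
      (rho R σ a hc u (Finsupp.single n q)) (n + M) ≠ 0 ∧
      ∀ j, n + M < j → (rho R σ a hc u (Finsupp.single n q)) j = 0 := by
  obtain ⟨f, rfl⟩ := hasRep_all R σ a u
  have hf : f ≠ 0 := by
    rintro rfl
    rw [Finsupp.sum_zero_index] at hu
    exact hu rfl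
  have hsupp : f.support.Nonempty := Finsupp.support_nonempty_iff.mpr hf
  refine ⟨f.support.max' hsupp, fun n q hq => ⟨?_, fun j hj => ?_⟩⟩
  · rw [rho_sum_apply, Finset.sum_eq_single (f.support.max' hsupp)]
    · rw [if_pos rfl]
      exact mul_ne_zero (Finsupp.mem_support_iff.mp (f.support.max'_mem hsupp))
        (g_ne_zero R σ a ha0 _ _ hq)
    · intro m hm hne
      exact if_neg (fun h => hne (by omega))
    · intro h
      exact absurd (f.support.max'_mem hsupp) h
  · rw [rho_sum_apply]
    refine Finset.sum_eq_zero fun m hm => ?_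
    have := Finset.le_max' f.support m hm
    exact if_neg (by omega)

end GWAP

theorem generalizedWeylAlgebra_isDomain (R : Type) [Ring R] [IsDomain R]
    [IsNoetherianRing R] [IsNoetherianRing Rᵐᵒᵖ]
    (σ : R ≃+* R) (a : R) (ha : a ∈ Set.center R) (ha0 : a ≠ 0) :
    IsDomain (GWA.GeneralizedWeylAlgebra R σ a) := by
  have hc : ∀ g : R, g * a = a * g := fun g => ((Set.mem_center_iff.mp ha).comm g).symm
  have hnt : (0 : GWA.GeneralizedWeylAlgebra R σ a) ≠ 1 := by
    intro h01
    have h1 : GWAP.rho R σ a hc 1 (Finsupp.single 0 (1 : R)) 0 = 1 := by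
      rw [map_one, Module.End.one_apply, Finsupp.single_eq_same]
    have h2 : GWAP.rho R σ a hc 0 = 0 := map_zero _
    rw [← h01, h2, LinearMap.zero_apply, Finsupp.zero_apply] at h1
    exact one_ne_zero h1.symm
  have hnzd : ∀ u v : GWA.GeneralizedWeylAlgebra R σ a, u * v = 0 → u = 0 ∨ v = 0 := by
    intro u v huv
    by_contra hcon
    push_neg at hcon
    obtain ⟨hu, hv⟩ := hcon
    obtain ⟨M, hM⟩ := GWAP.key R σ a hc ha0 u hu
    obtain ⟨N0, hN0⟩ := GWAP.key R σ a hc ha0 v hv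
    set w := GWAP.rho R σ a hc v (Finsupp.single 0 1) with hw
    have hw0 : w (0 + N0) ≠ 0 := (hN0 0 1 one_ne_zero).1
    have hwne : w ≠ 0 := fun h => hw0 (by rw [h]; rfl)
    have hwsupp : w.support.Nonempty := Finsupp.support_nonempty_iff.mpr hwne
    set N := w.support.max' hwsupp with hN
    have hdecomp : GWAP.rho R σ a hc u w
        = ∑ n ∈ w.support, GWAP.rho R σ a hc u (Finsupp.single n (w n)) := by
      conv_lhs => rw [← Finsupp.sum_single w]
      rw [Finsupp.sum, map_sum]
    have hval : (GWAP.rho R σ a hc u w) (N + M) ≠ 0 := by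
      rw [hdecomp, Finsupp.finset_sum_apply, Finset.sum_eq_single N]
      · exact (hM N (w N) (Finsupp.mem_support_iff.mp (w.support.max'_mem hwsupp))).1
      · intro n hn hne
        have hlt : n < N := lt_of_le_of_ne (Finset.le_max' _ _ hn) hne
        exact (hM n (w n) (Finsupp.mem_support_iff.mp hn)).2 (N + M) (by omega)
      · intro hNn
        exact absurd (w.support.max'_mem hwsupp) hNn
    have hzero : GWAP.rho R σ a hc u w = 0 := by
      rw [hw, ← Module.End.mul_apply, ← map_mul, huv, map_zero]
      rfl
    rw [hzero] at hval
    exact hval rfl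
  have : Nontrivial (GWA.GeneralizedWeylAlgebra R σ a) := ⟨⟨0, 1, hnt⟩⟩
  have : NoZeroDivisors (GWA.GeneralizedWeylAlgebra R σ a) :=
    ⟨fun {u v} h => hnzd u v h⟩
  exact NoZeroDivisors.to_isDomain _
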